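/- arXiv:1111.6419 — 2 statements merged into one kernel-verified Lean document; each statement's English description precedes it below -/
import Mathlib

section
/- Let 0 < r < R and let q : EuclideanSpace ℝ (Fin 2) → ℝ be continuous on the closed annulus { x : r ≤ ‖x‖ ≤ R }, harmonic (C² with vanishing Laplacian) on the open annulus { x : r < ‖x‖ < R }, with q(x) = 1 whenever ‖x‖ = r and q(x) = 0 whenever ‖x‖ = R. Then q(x) = (log R − log ‖x‖)/(log R − log r) for all x with r ≤ ‖x‖ ≤ R. -/
open Real Filter

lemma second_deriv_test {f : ℝ → ℝ} (hf : ∀ᶠ t in nhds 0, DifferentiableAt ℝ f t)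
    (hf' : DifferentiableAt ℝ (deriv f) 0) (hmax : IsLocalMax f 0) :
    deriv (deriv f) 0 ≤ 0 := by
  by_contra hpos
  push_neg at hpos
  have h0 : deriv f 0 = 0 := hmax.deriv_eq_zero
  have hd : HasDerivAt (deriv f) (deriv (deriv f) 0) 0 := hf'.hasDerivAt
  have hslope : Tendsto (slope (deriv f) 0) (nhdsWithin 0 {0}ᶜ) (nhds (deriv (deriv f) 0)) :=
    hasDerivAt_iff_tendsto_slope.mp hd
  have hev : ∀ᶠ t in nhdsWithin 0 {0}ᶜ, 0 < slope (deriv f) 0 t :=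
    hslope.eventually (eventually_gt_nhds hpos)
  rw [eventually_nhdsWithin_iff] at hev
  obtain ⟨δ1, hδ1, H1⟩ := Metric.eventually_nhds_iff.mp (hev.and (hf.and hmax))
  set t0 := δ1 / 2 with ht0
  have ht0pos : 0 < t0 := by positivity
  have ht0lt : ∀ t ∈ Set.Icc (0:ℝ) t0, dist t 0 < δ1 := by
    intro t ht
    rw [Real.dist_eq, sub_zero, abs_of_nonneg ht.1]
    linarith [ht.2]
  have hderiv_pos : ∀ t ∈ interior (Set.Icc (0:ℝ) t0), 0 < deriv f t := by
    rw [interior_Icc]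
    intro t ht
    have h := (H1 (ht0lt t ⟨le_of_lt ht.1, le_of_lt ht.2⟩)).1 (ne_of_gt ht.1)
    have : slope (deriv f) 0 t = deriv f t / t := by
      simp [slope_def_field, h0]
    rw [this] at h
    have := mul_pos h ht.1
    rwa [div_mul_cancel₀] at this
    exact ne_of_gt ht.1
  have hcont : ContinuousOn f (Set.Icc (0:ℝ) t0) := fun t ht =>
    ((H1 (ht0lt t ht)).2.1).continuousAt.continuousWithinAt
  have hmono := strictMonoOn_of_deriv_pos (convex_Icc (0:ℝ) t0) hcont hderiv_pos
  have hlt : f 0 < f t0 := hmono (Set.left_mem_Icc.mpr (le_of_lt ht0pos))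
    (Set.right_mem_Icc.mpr (le_of_lt ht0pos)) ht0pos
  have hle : f t0 ≤ f 0 := (H1 (ht0lt t0 (Set.right_mem_Icc.mpr ht0pos.le))).2.2
  linarith
open Real Filter

local notation "E2" => EuclideanSpace ℝ (Fin 2)

lemma dir_second_deriv_le {w : E2 → ℝ} {U : Set E2} (hU : IsOpen U) {x0 : E2} (hx0 : x0 ∈ U)
    (hd1 : ∀ x ∈ U, DifferentiableAt ℝ w x)
    {v : E2} (hd2 : DifferentiableAt ℝ (fun y => fderiv ℝ w y v) x0)
    (hmax : IsLocalMax w x0) :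
    fderiv ℝ (fun y => fderiv ℝ w y v) x0 v ≤ 0 := by
  set line : ℝ → E2 := fun t => x0 + t • v with hline
  have hline_cont : Continuous line := by continuity
  have hline0 : line 0 = x0 := by simp [hline]
  have hlineD : ∀ t : ℝ, HasDerivAt line v t := by
    intro t
    simpa [hline] using ((hasDerivAt_id t).smul_const v).const_add x0
  -- preimage of U is open nbhd of 0
  have hpre : ∀ᶠ t in nhds (0:ℝ), line t ∈ U := by
    have : line ⁻¹' U ∈ nhds (0:ℝ) :=
      (hU.preimage hline_cont).mem_nhds (by rw [Set.mem_preimage, hline0]; exact hx0)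
    exact this
  set f : ℝ → ℝ := w ∘ line with hf
  have hfD : ∀ t : ℝ, line t ∈ U → HasDerivAt f (fderiv ℝ w (line t) v) t := by
    intro t ht
    exact ((hd1 _ ht).hasFDerivAt.comp_hasDerivAt t (hlineD t))
  have hfdiff : ∀ᶠ t in nhds (0:ℝ), DifferentiableAt ℝ f t :=
    hpre.mono fun t ht => (hfD t ht).differentiableAt
  have hderiv_eq : (fun t => deriv f t) =ᶠ[nhds (0:ℝ)] fun t => fderiv ℝ w (line t) v :=
    hpre.mono fun t ht => (hfD t ht).deriv
  -- second derivative
  have hG : HasDerivAt (fun t => fderiv ℝ w (line t) v)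
      (fderiv ℝ (fun y => fderiv ℝ w y v) x0 v) 0 := by
    have h2 : HasFDerivAt (fun y => fderiv ℝ w y v) (fderiv ℝ (fun y => fderiv ℝ w y v) x0) (line 0) := by
      rw [hline0]; exact hd2.hasFDerivAt
    exact h2.comp_hasDerivAt 0 (hlineD 0)
  have hG' : HasDerivAt (deriv f) (fderiv ℝ (fun y => fderiv ℝ w y v) x0 v) 0 :=
    hG.congr_of_eventuallyEq hderiv_eq
  have hmaxf : IsLocalMax f 0 := by
    have : ∀ᶠ t in nhds (0:ℝ), w (line t) ≤ w x0 := hline_cont.continuousAt.eventually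
      (by rw [hline0]; exact hmax)
    have h0 : f 0 = w x0 := by simp [hf, Function.comp, hline0]
    rw [IsLocalMax, IsMaxFilter, h0]
    exact this
  have := second_deriv_test hfdiff hG'.differentiableAt ?_
  · rwa [hG'.deriv] at this
  · simpa [hline0] using hmaxf

noncomputable def Nq : E2 → ℝ := fun x => (x 0)^2 + (x 1)^2

noncomputable def pj (i : Fin 2) : E2 →L[ℝ] ℝ := EuclideanSpace.proj i

lemma pj_apply (i : Fin 2) (x : E2) : pj i x = x i := rfl

noncomputable def DN (x : E2) : E2 →L[ℝ] ℝ := (2 * x 0) • pj 0 + (2 * x 1) • pj 1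

lemma hasFDerivAt_Nq (x : E2) : HasFDerivAt Nq (DN x) x := by
  have h0 : HasFDerivAt (fun y : E2 => (y 0)^2) ((2 * x 0) • pj 0) x := by
    have := ((pj 0).hasFDerivAt (x := x)).mul ((pj 0).hasFDerivAt (x := x))
    refine (this.congr_of_eventuallyEq (Filter.Eventually.of_forall fun y => ?_)).congr_fderiv ?_
    · simp [pj_apply]; ring
    · ext v; simp [pj_apply]; ring
  have h1 : HasFDerivAt (fun y : E2 => (y 1)^2) ((2 * x 1) • pj 1) x := by
    have := ((pj 1).hasFDerivAt (x := x)).mul ((pj 1).hasFDerivAt (x := x))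
    refine (this.congr_of_eventuallyEq (Filter.Eventually.of_forall fun y => ?_)).congr_fderiv ?_
    · simp [pj_apply]; ring
    · ext v; simp [pj_apply]; ring
  exact h0.add h1

lemma single_apply (i j : Fin 2) : (EuclideanSpace.single i (1:ℝ)) j = if j = i then 1 else 0 :=
  EuclideanSpace.single_apply i 1 j

lemma DN_single (x : E2) (i : Fin 2) : DN x (EuclideanSpace.single i (1:ℝ)) = 2 * x i := by
  fin_cases i <;> simp [DN, pj_apply, single_apply]

lemma fderiv_Nq (x : E2) (i : Fin 2) :
    fderiv ℝ Nq x (EuclideanSpace.single i (1:ℝ)) = 2 * x i := by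
  rw [(hasFDerivAt_Nq x).fderiv, DN_single]

lemma fderiv_fderiv_Nq (x : E2) (i : Fin 2) :
    fderiv ℝ (fun y => fderiv ℝ Nq y (EuclideanSpace.single i (1:ℝ))) x
      (EuclideanSpace.single i (1:ℝ)) = 2 := by
  have heq : (fun y => fderiv ℝ Nq y (EuclideanSpace.single i (1:ℝ)))
      = fun y : E2 => 2 * y i := by
    funext y; exact fderiv_Nq y i
  rw [heq]
  have : HasFDerivAt (fun y : E2 => 2 * y i) ((2:ℝ) • pj i) x := by
    exact ((pj i).hasFDerivAt (x := x)).const_mul (2:ℝ)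
  rw [this.fderiv]
  simp [pj_apply, single_apply]

lemma norm_sq_eq_Nq (x : E2) : ‖x‖^2 = Nq x := by
  rw [EuclideanSpace.norm_eq]
  rw [Real.sq_sqrt (by positivity)]
  simp [Nq, Fin.sum_univ_two, sq_abs]

lemma diff_Nq (x : E2) : DifferentiableAt ℝ Nq x := (hasFDerivAt_Nq x).differentiableAt

lemma diff_fderiv_Nq (x : E2) (i : Fin 2) :
    DifferentiableAt ℝ (fun y => fderiv ℝ Nq y (EuclideanSpace.single i (1:ℝ))) x := by
  have heq : (fun y => fderiv ℝ Nq y (EuclideanSpace.single i (1:ℝ)))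
      = fun y : E2 => 2 * y i := by
    funext y; exact fderiv_Nq y i
  rw [heq]
  exact (((pj i).differentiable).const_mul 2).differentiableAt

lemma annulus_facts (r R : ℝ) (hr : 0 < r) (hrR : r < R) :
    IsOpen {x : E2 | r < ‖x‖ ∧ ‖x‖ < R} ∧ IsCompact {x : E2 | r ≤ ‖x‖ ∧ ‖x‖ ≤ R}
    ∧ {x : E2 | r ≤ ‖x‖ ∧ ‖x‖ ≤ R}.Nonempty := by
  refine ⟨?_, ?_, ?_⟩
  · exact (isOpen_lt continuous_const continuous_norm).inter
      (isOpen_lt continuous_norm continuous_const)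
  · apply IsCompact.of_isClosed_subset (isCompact_closedBall (0:E2) R)
    · exact (isClosed_le continuous_const continuous_norm).inter
        (isClosed_le continuous_norm continuous_const)
    · intro x hx; simpa [Metric.mem_closedBall, dist_zero_right] using hx.2
  · refine ⟨EuclideanSpace.single 0 r, ?_, ?_⟩ <;>
      simp [EuclideanSpace.norm_single, abs_of_pos hr] <;> linarith

section MP
open Real Filter

lemma IsMaxOn.isLocalMax' {w : E2 → ℝ} {K : Set E2} {x0 : E2} (h : IsMaxOn w K x0)
    (hK : K ∈ nhds x0) : IsLocalMax w x0 :=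
  Filter.eventually_iff_exists_mem.2 ⟨K, hK, fun x hx => h hx⟩

lemma max_principle (r R : ℝ) (hr : 0 < r) (hrR : r < R) (u : E2 → ℝ)
    (hcont : ContinuousOn u {x : E2 | r ≤ ‖x‖ ∧ ‖x‖ ≤ R})
    (hd1 : ∀ x ∈ {x : E2 | r < ‖x‖ ∧ ‖x‖ < R}, DifferentiableAt ℝ u x)
    (hd2 : ∀ (i : Fin 2), ∀ x ∈ {x : E2 | r < ‖x‖ ∧ ‖x‖ < R},
      DifferentiableAt ℝ (fun y => fderiv ℝ u y (EuclideanSpace.single i (1:ℝ))) x)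
    (hharm : ∀ x ∈ {x : E2 | r < ‖x‖ ∧ ‖x‖ < R},
      ∑ i : Fin 2, fderiv ℝ (fun y => fderiv ℝ u y (EuclideanSpace.single i (1:ℝ))) x
        (EuclideanSpace.single i (1:ℝ)) = 0)
    (hbd : ∀ x : E2, ‖x‖ = r ∨ ‖x‖ = R → u x = 0) :
    ∀ x : E2, r ≤ ‖x‖ → ‖x‖ ≤ R → u x ≤ 0 := by
  set U : Set E2 := {x : E2 | r < ‖x‖ ∧ ‖x‖ < R} with hUdef
  set K : Set E2 := {x : E2 | r ≤ ‖x‖ ∧ ‖x‖ ≤ R} with hKdef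
  obtain ⟨hUopen, hKcomp, hKne⟩ := annulus_facts r R hr hrR
  have hUK : U ⊆ K := fun x hx => ⟨le_of_lt hx.1, le_of_lt hx.2⟩
  have key : ∀ ε : ℝ, 0 < ε → ∀ x ∈ K, u x ≤ ε * R^2 := by
    intro ε hε x hx
    set w : E2 → ℝ := fun x => u x + ε * Nq x with hwdef
    have hNcont : Continuous Nq := by
      have : Continuous fun x : E2 => (x 0)^2 + (x 1)^2 := by
        apply Continuous.add <;> exact ((pj _).continuous.pow 2)
      exact this
    have hwcont : ContinuousOn w K := hcont.add ((continuous_const.mul hNcont).continuousOn)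
    obtain ⟨x0, hx0K, hx0max⟩ := hKcomp.exists_isMaxOn hKne hwcont
    by_cases hx0U : x0 ∈ U
    · exfalso
      have hKn : K ∈ nhds x0 := Filter.mem_of_superset (hUopen.mem_nhds hx0U) hUK
      have hmax : IsLocalMax w x0 := hx0max.isLocalMax' hKn
      have hUn : U ∈ nhds x0 := hUopen.mem_nhds hx0U
      -- for each direction, second derivative of w at x0
      have hsec : ∀ i : Fin 2,
          fderiv ℝ (fun y => fderiv ℝ w y (EuclideanSpace.single i (1:ℝ))) x0
            (EuclideanSpace.single i (1:ℝ))
          = fderiv ℝ (fun y => fderiv ℝ u y (EuclideanSpace.single i (1:ℝ))) x0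
            (EuclideanSpace.single i (1:ℝ)) + ε * 2 := by
        intro i
        set e := EuclideanSpace.single i (1:ℝ) with he
        have heq : (fun y => fderiv ℝ w y e)
            =ᶠ[nhds x0] fun y => fderiv ℝ u y e + ε * (2 * y i) := by
          filter_upwards [hUn] with y hy
          have : fderiv ℝ w y = fderiv ℝ u y + ε • fderiv ℝ Nq y := by
            rw [hwdef]
            rw [fderiv_fun_add (hd1 y hy) ((diff_Nq y).const_mul ε), fderiv_const_mul (diff_Nq y)]
          rw [this]
          simp [fderiv_Nq y i, he]
        rw [heq.fderiv_eq]
        have hφ : DifferentiableAt ℝ (fun y : E2 => ε * (2 * y i)) x0 := by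
          exact (((pj i).differentiable.const_mul 2).const_mul ε).differentiableAt
        rw [fderiv_fun_add (hd2 i x0 hx0U) hφ]
        have h2 : fderiv ℝ (fun y : E2 => ε * (2 * y i)) x0 e = ε * 2 := by
          have hF : HasFDerivAt (fun y : E2 => ε * (2 * y i)) ((ε * 2) • pj i) x0 := by
            have := ((pj i).hasFDerivAt (x := x0)).const_mul (ε * 2)
            refine this.congr_of_eventuallyEq (Filter.Eventually.of_forall fun y => ?_)
            show ε * (2 * y i) = ε * 2 * y i; ring
          rw [hF.fderiv]
          simp [pj_apply, single_apply, he]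
        simp [h2, ← he]
      have hle : ∀ i : Fin 2,
          fderiv ℝ (fun y => fderiv ℝ w y (EuclideanSpace.single i (1:ℝ))) x0
            (EuclideanSpace.single i (1:ℝ)) ≤ 0 := by
        intro i
        apply dir_second_deriv_le hUopen hx0U
          (fun x hx => (hd1 x hx).add ((diff_Nq x).const_mul ε)) _ hmax
        have heq : (fun y => fderiv ℝ w y (EuclideanSpace.single i (1:ℝ)))
            =ᶠ[nhds x0] fun y => fderiv ℝ u y (EuclideanSpace.single i (1:ℝ))
              + ε * (2 * y i) := by
          filter_upwards [hUn] with y hy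
          have : fderiv ℝ w y = fderiv ℝ u y + ε • fderiv ℝ Nq y := by
            rw [hwdef, fderiv_fun_add (hd1 y hy) ((diff_Nq y).const_mul ε),
              fderiv_const_mul (diff_Nq y)]
          rw [this]
          simp [fderiv_Nq y i]
        refine heq.differentiableAt_iff.mpr ?_
        exact (hd2 i x0 hx0U).add
          ((((pj i).differentiable.const_mul 2).const_mul ε).differentiableAt)
      have hsum : (∑ i : Fin 2, fderiv ℝ (fun y => fderiv ℝ w y
          (EuclideanSpace.single i (1:ℝ))) x0 (EuclideanSpace.single i (1:ℝ))) = 4 * ε := by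
        rw [Fin.sum_univ_two, hsec 0, hsec 1]
        have := hharm x0 hx0U
        rw [Fin.sum_univ_two] at this
        linarith
      have : (∑ i : Fin 2, fderiv ℝ (fun y => fderiv ℝ w y
          (EuclideanSpace.single i (1:ℝ))) x0 (EuclideanSpace.single i (1:ℝ))) ≤ 0 := by
        rw [Fin.sum_univ_two]
        linarith [hle 0, hle 1]
      rw [hsum] at this
      nlinarith
    · -- boundary case
      have hb : ‖x0‖ = r ∨ ‖x0‖ = R := by
        rcases hx0K with ⟨h1, h2⟩
        rcases lt_or_eq_of_le h1 with h1' | h1'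
        · rcases lt_or_eq_of_le h2 with h2' | h2'
          · exact absurd ⟨h1', h2'⟩ hx0U
          · exact Or.inr h2'
        · exact Or.inl h1'.symm
      have hu0 : u x0 = 0 := hbd x0 hb
      have hwx0 : w x0 ≤ ε * R^2 := by
        have hN : Nq x0 ≤ R^2 := by
          rw [← norm_sq_eq_Nq]
          exact pow_le_pow_left₀ (norm_nonneg _) hx0K.2 2
        rw [hwdef]; simp only [hu0, zero_add]
        exact mul_le_mul_of_nonneg_left hN (le_of_lt hε)
      have hwx : w x ≤ w x0 := hx0max hx
      have hNx : 0 ≤ Nq x := by rw [← norm_sq_eq_Nq]; positivity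
      have : u x + ε * Nq x ≤ ε * R^2 := le_trans hwx hwx0
      nlinarith
  intro x hx1 hx2
  by_contra hpos
  push_neg at hpos
  have hR : (0:ℝ) < R := lt_trans hr hrR
  have hR2 : (0:ℝ) < R^2 := by positivity
  have hε : 0 < u x / (2 * R^2) := div_pos hpos (by positivity)
  have h2 := key _ hε x ⟨hx1, hx2⟩
  have : u x / (2 * R ^ 2) * R ^ 2 = u x / 2 := by field_simp
  rw [this] at h2
  linarith
end MP

lemma Nq_def (x : E2) : Nq x = (x 0)^2 + (x 1)^2 := rfl


section LG

noncomputable def Lg : E2 → ℝ := fun x => Real.log (Nq x)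

lemma continuous_Nq : Continuous Nq := by
  have : Continuous fun x : E2 => (x 0)^2 + (x 1)^2 := by
    apply Continuous.add
    · exact (pj (0 : Fin 2)).continuous.pow 2
    · exact (pj (1 : Fin 2)).continuous.pow 2
  exact this

lemma Vopen : IsOpen {x : E2 | Nq x ≠ 0} :=
  isOpen_compl_singleton.preimage continuous_Nq

lemma hasFDerivAt_Lg {x : E2} (hx : Nq x ≠ 0) :
    HasFDerivAt Lg ((Nq x)⁻¹ • DN x) x :=
  (Real.hasDerivAt_log hx).comp_hasFDerivAt x (hasFDerivAt_Nq x)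

lemma diff_Lg {x : E2} (hx : Nq x ≠ 0) : DifferentiableAt ℝ Lg x :=
  (hasFDerivAt_Lg hx).differentiableAt

lemma fderiv_Lg_single {x : E2} (hx : Nq x ≠ 0) (i : Fin 2) :
    fderiv ℝ Lg x (EuclideanSpace.single i (1:ℝ)) = 2 * x i * (Nq x)⁻¹ := by
  rw [(hasFDerivAt_Lg hx).fderiv]
  simp [DN_single]
  ring

lemma fderiv_Lg_eventually {x : E2} (hx : Nq x ≠ 0) (i : Fin 2) :
    (fun y => fderiv ℝ Lg y (EuclideanSpace.single i (1:ℝ)))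
      =ᶠ[nhds x] fun y => 2 * y i * (Nq y)⁻¹ := by
  filter_upwards [Vopen.mem_nhds hx] with y hy
  exact fderiv_Lg_single hy i

lemma hasFDerivAt_phi {x : E2} (hx : Nq x ≠ 0) (i : Fin 2) :
    HasFDerivAt (fun y : E2 => 2 * y i * (Nq y)⁻¹)
      ((2 * x i) • (-(Nq x ^ 2)⁻¹ • DN x) + (Nq x)⁻¹ • ((2:ℝ) • (pj i : E2 →L[ℝ] ℝ))) x := by
  have h1 : HasFDerivAt (fun y : E2 => 2 * y i) ((2:ℝ) • (pj i : E2 →L[ℝ] ℝ)) x := by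
    exact ((pj i).hasFDerivAt (x := x)).const_mul (2:ℝ)
  have h2 : HasFDerivAt (fun y : E2 => (Nq y)⁻¹) (-(Nq x ^ 2)⁻¹ • DN x) x :=
    (hasDerivAt_inv hx).comp_hasFDerivAt x (hasFDerivAt_Nq x)
  exact h1.mul h2

lemma second_Lg {x : E2} (hx : Nq x ≠ 0) (i : Fin 2) :
    fderiv ℝ (fun y => fderiv ℝ Lg y (EuclideanSpace.single i (1:ℝ))) x
      (EuclideanSpace.single i (1:ℝ))
    = 2 * x i * (-(Nq x ^ 2)⁻¹ * (2 * x i)) + (Nq x)⁻¹ * 2 := by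
  rw [(fderiv_Lg_eventually hx i).fderiv_eq, (hasFDerivAt_phi hx i).fderiv]
  simp [DN_single, pj_apply, single_apply]

lemma diff_fderiv_Lg {x : E2} (hx : Nq x ≠ 0) (i : Fin 2) :
    DifferentiableAt ℝ (fun y => fderiv ℝ Lg y (EuclideanSpace.single i (1:ℝ))) x :=
  (fderiv_Lg_eventually hx i).symm.differentiableAt_iff.mp
    (hasFDerivAt_phi hx i).differentiableAt

lemma sum_second_Lg {x : E2} (hx : Nq x ≠ 0) :
    ∑ i : Fin 2, fderiv ℝ (fun y => fderiv ℝ Lg y (EuclideanSpace.single i (1:ℝ))) x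
      (EuclideanSpace.single i (1:ℝ)) = 0 := by
  rw [Fin.sum_univ_two, second_Lg hx 0, second_Lg hx 1]
  have h := Nq_def x
  field_simp
  nlinarith [Nq_def x]

end LG

theorem bm_escape_probability_annulus_uniqueness
    (r R : ℝ) (hr : 0 < r) (hrR : r < R)
    (q : EuclideanSpace ℝ (Fin 2) → ℝ)
    (hcont : ContinuousOn q {x : EuclideanSpace ℝ (Fin 2) | r ≤ ‖x‖ ∧ ‖x‖ ≤ R})
    (hsmooth : ContDiffOn ℝ 2 q {x : EuclideanSpace ℝ (Fin 2) | r < ‖x‖ ∧ ‖x‖ < R})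
    (hharm : ∀ x ∈ {x : EuclideanSpace ℝ (Fin 2) | r < ‖x‖ ∧ ‖x‖ < R},
      ∑ i : Fin 2,
        fderiv ℝ (fun y => fderiv ℝ q y (EuclideanSpace.single i (1 : ℝ))) x
          (EuclideanSpace.single i (1 : ℝ)) = 0)
    (hinner : ∀ x : EuclideanSpace ℝ (Fin 2), ‖x‖ = r → q x = 1)
    (houter : ∀ x : EuclideanSpace ℝ (Fin 2), ‖x‖ = R → q x = 0) :
    ∀ x : EuclideanSpace ℝ (Fin 2), r ≤ ‖x‖ → ‖x‖ ≤ R →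
      q x = (Real.log R - Real.log ‖x‖) / (Real.log R - Real.log r) := by
  have hR : (0:ℝ) < R := lt_trans hr hrR
  set L : ℝ := Real.log R - Real.log r with hLdef
  have hL : 0 < L := sub_pos.mpr (Real.log_lt_log hr hrR)
  set A : ℝ := Real.log R / L with hAdef
  set c : ℝ := -(1/(2*L)) with hcdef
  set H : E2 → ℝ := fun x => A + c * Lg x with hHdef
  set U : Set E2 := {x : E2 | r < ‖x‖ ∧ ‖x‖ < R} with hUdef
  set K : Set E2 := {x : E2 | r ≤ ‖x‖ ∧ ‖x‖ ≤ R} with hKdef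
  obtain ⟨hUopen, -, -⟩ := annulus_facts r R hr hrR
  -- positivity of Nq on K
  have hNq : ∀ x : E2, 0 < ‖x‖ → Nq x ≠ 0 := by
    intro x hx
    rw [← norm_sq_eq_Nq]
    positivity
  have hNqK : ∀ x ∈ K, Nq x ≠ 0 := fun x hx => hNq x (lt_of_lt_of_le hr hx.1)
  have hNqU : ∀ x ∈ U, Nq x ≠ 0 := fun x hx => hNq x (lt_trans hr hx.1)
  -- Lg x = 2 log ‖x‖ for x ≠ 0
  have hLg : ∀ x : E2, 0 < ‖x‖ → Lg x = 2 * Real.log ‖x‖ := by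
    intro x hx
    have : Nq x = ‖x‖^2 := (norm_sq_eq_Nq x).symm
    rw [Lg, this, Real.log_pow]
    push_cast; ring
  -- H boundary values and formula
  have hHval : ∀ x : E2, 0 < ‖x‖ → H x = (Real.log R - Real.log ‖x‖) / L := by
    intro x hx
    rw [hHdef]
    simp only
    rw [hLg x hx, hAdef, hcdef]
    field_simp
    ring
  -- q differentiability facts
  have hd1q : ∀ x ∈ U, DifferentiableAt ℝ q x := by
    intro x hx
    exact (hsmooth.differentiableOn (by norm_num) x hx).differentiableAt (hUopen.mem_nhds hx)
  have hd2q : ∀ (i : Fin 2), ∀ x ∈ U,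
      DifferentiableAt ℝ (fun y => fderiv ℝ q y (EuclideanSpace.single i (1:ℝ))) x := by
    intro i x hx
    have h1 : ContDiffOn ℝ 1 (fun y => fderiv ℝ q y) U :=
      hsmooth.fderiv_of_isOpen hUopen (by norm_num)
    have h2 : ContDiffOn ℝ 1 (fun y => fderiv ℝ q y (EuclideanSpace.single i (1:ℝ))) U :=
      h1.clm_apply contDiffOn_const
    exact (h2.differentiableOn (by norm_num) x hx).differentiableAt (hUopen.mem_nhds hx)
  -- H differentiability facts
  have hd1H : ∀ x ∈ U, DifferentiableAt ℝ H x := by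
    intro x hx
    exact (differentiableAt_const A).add ((diff_Lg (hNqU x hx)).const_mul c)
  have hfdH : ∀ x, Nq x ≠ 0 → ∀ i : Fin 2,
      fderiv ℝ H x (EuclideanSpace.single i (1:ℝ))
        = c * fderiv ℝ Lg x (EuclideanSpace.single i (1:ℝ)) := by
    intro x hx i
    rw [hHdef]
    rw [fderiv_const_add, fderiv_const_mul (diff_Lg hx)]
    simp
  have hd2H : ∀ (i : Fin 2), ∀ x, Nq x ≠ 0 →
      DifferentiableAt ℝ (fun y => fderiv ℝ H y (EuclideanSpace.single i (1:ℝ))) x := by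
    intro i x hx
    have hev : (fun y => fderiv ℝ H y (EuclideanSpace.single i (1:ℝ)))
        =ᶠ[nhds x] fun y => c * fderiv ℝ Lg y (EuclideanSpace.single i (1:ℝ)) := by
      filter_upwards [Vopen.mem_nhds hx] with y hy
      exact hfdH y hy i
    rw [hev.differentiableAt_iff]
    exact (diff_fderiv_Lg hx i).const_mul c
  have hsecH : ∀ x, Nq x ≠ 0 → ∀ i : Fin 2,
      fderiv ℝ (fun y => fderiv ℝ H y (EuclideanSpace.single i (1:ℝ))) x
        (EuclideanSpace.single i (1:ℝ))
      = c * fderiv ℝ (fun y => fderiv ℝ Lg y (EuclideanSpace.single i (1:ℝ))) x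
        (EuclideanSpace.single i (1:ℝ)) := by
    intro x hx i
    have hev : (fun y => fderiv ℝ H y (EuclideanSpace.single i (1:ℝ)))
        =ᶠ[nhds x] fun y => c * fderiv ℝ Lg y (EuclideanSpace.single i (1:ℝ)) := by
      filter_upwards [Vopen.mem_nhds hx] with y hy
      exact hfdH y hy i
    rw [hev.fderiv_eq, fderiv_const_mul (diff_fderiv_Lg hx i)]
    simp
  have hharmH : ∀ x, Nq x ≠ 0 →
      ∑ i : Fin 2, fderiv ℝ (fun y => fderiv ℝ H y (EuclideanSpace.single i (1:ℝ))) x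
        (EuclideanSpace.single i (1:ℝ)) = 0 := by
    intro x hx
    rw [Fin.sum_univ_two, hsecH x hx 0, hsecH x hx 1, ← mul_add]
    have := sum_second_Lg hx
    rw [Fin.sum_univ_two] at this
    rw [this, mul_zero]
  -- continuity of H on K
  have hHcont : ContinuousOn H K := by
    intro x hx
    apply ContinuousAt.continuousWithinAt
    apply continuousAt_const.add
    apply continuousAt_const.mul
    exact (Real.continuousAt_log (hNqK x hx)).comp continuous_Nq.continuousAt
  -- generic facts for u = σ•q + τ•H
  have main : ∀ u : E2 → ℝ, (u = fun x => q x - H x) ∨ (u = fun x => H x - q x) →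
      ∀ x : E2, r ≤ ‖x‖ → ‖x‖ ≤ R → u x ≤ 0 := by
    intro u hu
    apply max_principle r R hr hrR u
    · rcases hu with h | h <;> rw [h]
      · exact hcont.sub hHcont
      · exact hHcont.sub hcont
    · intro x hx
      rcases hu with h | h <;> rw [h]
      · exact (hd1q x hx).sub (hd1H x hx)
      · exact (hd1H x hx).sub (hd1q x hx)
    · intro i x hx
      have hev1 : (fun y => fderiv ℝ (fun z => q z - H z) y (EuclideanSpace.single i (1:ℝ)))
          =ᶠ[nhds x] fun y => fderiv ℝ q y (EuclideanSpace.single i (1:ℝ))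
            - fderiv ℝ H y (EuclideanSpace.single i (1:ℝ)) := by
        filter_upwards [hUopen.mem_nhds hx] with y hy
        rw [fderiv_fun_sub (hd1q y hy) (hd1H y hy)]
        simp
      have hev2 : (fun y => fderiv ℝ (fun z => H z - q z) y (EuclideanSpace.single i (1:ℝ)))
          =ᶠ[nhds x] fun y => fderiv ℝ H y (EuclideanSpace.single i (1:ℝ))
            - fderiv ℝ q y (EuclideanSpace.single i (1:ℝ)) := by
        filter_upwards [hUopen.mem_nhds hx] with y hy
        rw [fderiv_fun_sub (hd1H y hy) (hd1q y hy)]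
        simp
      rcases hu with h | h <;> rw [h]
      · rw [hev1.differentiableAt_iff]
        exact (hd2q i x hx).sub (hd2H i x (hNqU x hx))
      · rw [hev2.differentiableAt_iff]
        exact (hd2H i x (hNqU x hx)).sub (hd2q i x hx)
    · intro x hx
      have key : ∀ i : Fin 2,
          fderiv ℝ (fun y => fderiv ℝ (fun z => q z - H z) y (EuclideanSpace.single i (1:ℝ))) x
            (EuclideanSpace.single i (1:ℝ))
          = fderiv ℝ (fun y => fderiv ℝ q y (EuclideanSpace.single i (1:ℝ))) x
              (EuclideanSpace.single i (1:ℝ))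
            - fderiv ℝ (fun y => fderiv ℝ H y (EuclideanSpace.single i (1:ℝ))) x
              (EuclideanSpace.single i (1:ℝ)) := by
        intro i
        have hev1 : (fun y => fderiv ℝ (fun z => q z - H z) y (EuclideanSpace.single i (1:ℝ)))
            =ᶠ[nhds x] fun y => fderiv ℝ q y (EuclideanSpace.single i (1:ℝ))
              - fderiv ℝ H y (EuclideanSpace.single i (1:ℝ)) := by
          filter_upwards [hUopen.mem_nhds hx] with y hy
          rw [fderiv_fun_sub (hd1q y hy) (hd1H y hy)]
          simp
        rw [hev1.fderiv_eq, fderiv_fun_sub (hd2q i x hx) (hd2H i x (hNqU x hx))]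
        simp
      have hq := hharm x hx
      have hH := hharmH x (hNqU x hx)
      rcases hu with h | h <;> rw [h]
      · rw [Fin.sum_univ_two, key 0, key 1]
        rw [Fin.sum_univ_two] at hq hH
        linarith
      · have key2 : ∀ i : Fin 2,
            fderiv ℝ (fun y => fderiv ℝ (fun z => H z - q z) y (EuclideanSpace.single i (1:ℝ))) x
              (EuclideanSpace.single i (1:ℝ))
            = fderiv ℝ (fun y => fderiv ℝ H y (EuclideanSpace.single i (1:ℝ))) x
                (EuclideanSpace.single i (1:ℝ))
              - fderiv ℝ (fun y => fderiv ℝ q y (EuclideanSpace.single i (1:ℝ))) x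
                (EuclideanSpace.single i (1:ℝ)) := by
          intro i
          have hev2 : (fun y => fderiv ℝ (fun z => H z - q z) y (EuclideanSpace.single i (1:ℝ)))
              =ᶠ[nhds x] fun y => fderiv ℝ H y (EuclideanSpace.single i (1:ℝ))
                - fderiv ℝ q y (EuclideanSpace.single i (1:ℝ)) := by
            filter_upwards [hUopen.mem_nhds hx] with y hy
            rw [fderiv_fun_sub (hd1H y hy) (hd1q y hy)]
            simp
          rw [hev2.fderiv_eq, fderiv_fun_sub (hd2H i x (hNqU x hx)) (hd2q i x hx)]
          simp
        rw [Fin.sum_univ_two, key2 0, key2 1]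
        rw [Fin.sum_univ_two] at hq hH
        linarith
    · intro x hxb
      have hxpos : 0 < ‖x‖ := by rcases hxb with h | h <;> rw [h] <;> [exact hr; exact hR]
      have hHx := hHval x hxpos
      have hq : q x = if ‖x‖ = r then 1 else 0 := by
        rcases hxb with h | h
        · rw [if_pos h]; exact hinner x h
        · by_cases h' : ‖x‖ = r
          · rw [if_pos h']; exact hinner x h'
          · rw [if_neg h']; exact houter x h
      rcases hxb with h | h
      · have : H x = 1 := by
          rw [hHx, h]; field_simp; exact hLdef.symm
        rcases hu with h2 | h2 <;> rw [h2] <;> simp <;>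
          rw [hinner x h, this] <;> norm_num
      · have : H x = 0 := by
          rw [hHx, h]; simp
        rcases hu with h2 | h2 <;> rw [h2] <;> simp <;>
          rw [houter x h, this] <;> norm_num
  intro x hx1 hx2
  have h1 := main (fun x => q x - H x) (Or.inl rfl) x hx1 hx2
  have h2 := main (fun x => H x - q x) (Or.inr rfl) x hx1 hx2
  have hqx : q x = H x := by linarith
  rw [hqx, hHval x (lt_of_lt_of_le hr hx1)]
end

section
/- Let α ∈ (0,2), r > 0, and x ∈ (−r, r). Then the function y ↦ (r² − x²)^{α/2}·(y² − r²)^{−α/2}·(y − x)^{−1} is integrable on (r, ∞), and, defining p(x) = (sin(πα/2)/π) · ∫_r^∞ (r² − x²)^{α/2}·(y² − r²)^{−α/2}·(y − x)^{−1} dy, one has p(x) → 0 as x → −r from the right. -/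
open MeasureTheory Set

private lemma aux_integrable (α r x : ℝ) (hα : α ∈ Set.Ioo (0 : ℝ) 2) (hr : 0 < r)
    (hx : x < r) :
    IntegrableOn (fun y : ℝ => (y ^ 2 - r ^ 2) ^ (-(α / 2)) * (y - x)⁻¹) (Set.Ioi r) := by
  obtain ⟨hα0, hα2⟩ := hα
  have hhalf : 0 < α / 2 := by linarith
  have hhalf1 : α / 2 < 1 := by linarith
  have hmeas : AEStronglyMeasurable
      (fun y : ℝ => (y ^ 2 - r ^ 2) ^ (-(α / 2)) * (y - x)⁻¹) volume := by
    apply Measurable.aestronglyMeasurable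
    measurability
  have hsplit : Set.Ioi r = Set.Ioc r (2 * r) ∪ Set.Ioi (2 * r) :=
    (Set.Ioc_union_Ioi_eq_Ioi (by linarith)).symm
  rw [hsplit]
  apply IntegrableOn.union
  · -- near r : dominate by const * (y - r) ^ (-(α/2))
    have hbase : IntegrableOn (fun y : ℝ => (y - r) ^ (-(α / 2))) (Set.Ioc r (2 * r)) := by
      have h1 : IntervalIntegrable (fun y : ℝ => y ^ (-(α / 2))) volume 0 r :=
        intervalIntegral.intervalIntegrable_rpow' (by linarith)
      have h2 : IntervalIntegrable (fun y : ℝ => (y - r) ^ (-(α / 2))) volume r (2 * r) := by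
        have := h1.comp_sub_right r
        simpa [zero_add, two_mul] using this
      rw [intervalIntegrable_iff_integrableOn_Ioc_of_le (by linarith)] at h2
      exact h2
    refine (hbase.const_mul ((2 * r) ^ (-(α / 2)) * (r - x)⁻¹)).mono' hmeas.restrict ?_
    filter_upwards [ae_restrict_mem measurableSet_Ioc] with y hy
    obtain ⟨hy1, hy2⟩ := hy
    have hyr : 0 < y - r := by linarith
    have hyx : 0 < y - x := by linarith
    have hsq : 0 < y ^ 2 - r ^ 2 := by nlinarith
    have h1 : (y ^ 2 - r ^ 2) ^ (-(α / 2)) ≤ ((y - r) * (2 * r)) ^ (-(α / 2)) := by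
      apply Real.rpow_le_rpow_of_nonpos (by positivity) (by nlinarith) (by linarith)
    have h1' : ((y - r) * (2 * r)) ^ (-(α / 2))
        = (y - r) ^ (-(α / 2)) * (2 * r) ^ (-(α / 2)) :=
      Real.mul_rpow hyr.le (by positivity)
    have h2 : (y - x)⁻¹ ≤ (r - x)⁻¹ := by
      apply inv_anti₀ (by linarith) (by linarith)
    have hpos1 : (0:ℝ) ≤ (y ^ 2 - r ^ 2) ^ (-(α / 2)) := Real.rpow_nonneg hsq.le _
    rw [Real.norm_eq_abs, abs_of_nonneg (by positivity)]
    calc (y ^ 2 - r ^ 2) ^ (-(α / 2)) * (y - x)⁻¹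
        ≤ ((y - r) ^ (-(α / 2)) * (2 * r) ^ (-(α / 2))) * (r - x)⁻¹ := by
          rw [← h1']
          exact mul_le_mul h1 h2 (by positivity) (Real.rpow_nonneg (by positivity) _)
      _ = (2 * r) ^ (-(α / 2)) * (r - x)⁻¹ * (y - r) ^ (-(α / 2)) := by ring
  · -- at infinity : dominate by const * y ^ (-α - 1)
    have hbase : IntegrableOn (fun y : ℝ => y ^ (-α - 1)) (Set.Ioi (2 * r)) :=
      integrableOn_Ioi_rpow_of_lt (by linarith) (by linarith)
    refine (hbase.const_mul ((3 / 4 : ℝ) ^ (-(α / 2)) * 2)).mono' hmeas.restrict ?_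
    filter_upwards [ae_restrict_mem measurableSet_Ioi] with y hy
    rw [Set.mem_Ioi] at hy
    have hy0 : (0:ℝ) < y := by linarith
    have hsq : 0 < y ^ 2 - r ^ 2 := by nlinarith
    have hyx : 0 < y - x := by linarith
    have h1 : (y ^ 2 - r ^ 2) ^ (-(α / 2)) ≤ (3 / 4 * y ^ 2) ^ (-(α / 2)) := by
      apply Real.rpow_le_rpow_of_nonpos (by positivity) (by nlinarith) (by linarith)
    have h1' : (3 / 4 * y ^ 2 : ℝ) ^ (-(α / 2)) = (3 / 4 : ℝ) ^ (-(α / 2)) * y ^ (-α) := by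
      rw [Real.mul_rpow (by norm_num) (by positivity)]
      congr 1
      rw [← Real.rpow_natCast y 2, ← Real.rpow_mul hy0.le]
      norm_num
      ring_nf
    have h2 : (y - x)⁻¹ ≤ 2 * y⁻¹ := by
      rw [show (2:ℝ) * y⁻¹ = (y / 2)⁻¹ by field_simp]
      apply inv_anti₀ (by linarith) (by linarith)
    rw [Real.norm_eq_abs, abs_of_nonneg (by positivity)]
    calc (y ^ 2 - r ^ 2) ^ (-(α / 2)) * (y - x)⁻¹
        ≤ ((3 / 4 : ℝ) ^ (-(α / 2)) * y ^ (-α)) * (2 * y⁻¹) := by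
          rw [← h1']
          exact mul_le_mul h1 h2 (by positivity) (Real.rpow_nonneg (by positivity) _)
      _ = (3 / 4 : ℝ) ^ (-(α / 2)) * 2 * (y ^ (-α) * y⁻¹) := by ring
      _ = (3 / 4 : ℝ) ^ (-(α / 2)) * 2 * y ^ (-α - 1) := by
          rw [show y ^ (-α - 1) = y ^ (-α) * y ^ (-1 : ℝ) by
            rw [← Real.rpow_add hy0]; ring_nf]
          rw [Real.rpow_neg_one]

theorem stable_escape_poisson_kernel_left_boundary
    (α r : ℝ) (hα : α ∈ Set.Ioo (0 : ℝ) 2) (hr : 0 < r) :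
    (∀ x ∈ Set.Ioo (-r) r,
      IntegrableOn
        (fun y : ℝ => (r ^ 2 - x ^ 2) ^ (α / 2) * (y ^ 2 - r ^ 2) ^ (-(α / 2)) * (y - x)⁻¹)
        (Set.Ioi r)) ∧
    Filter.Tendsto
      (fun x : ℝ => (Real.sin (Real.pi * α / 2) / Real.pi) *
        ∫ y in Set.Ioi r,
          (r ^ 2 - x ^ 2) ^ (α / 2) * (y ^ 2 - r ^ 2) ^ (-(α / 2)) * (y - x)⁻¹)
      (nhdsWithin (-r) (Set.Ioi (-r))) (nhds 0) := by
  obtain ⟨hα0, hα2⟩ := hα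
  constructor
  · intro x hx
    have h := (aux_integrable α r x ⟨hα0, hα2⟩ hr hx.2).const_mul ((r ^ 2 - x ^ 2) ^ (α / 2))
    simpa [mul_assoc, IntegrableOn] using h
  · -- the limit
    set c := Real.sin (Real.pi * α / 2) / Real.pi with hc
    set M := ∫ y in Set.Ioi r, (y ^ 2 - r ^ 2) ^ (-(α / 2)) * y⁻¹ with hM
    have hint0 : IntegrableOn (fun y : ℝ => (y ^ 2 - r ^ 2) ^ (-(α / 2)) * y⁻¹)
        (Set.Ioi r) := by
      simpa using aux_integrable α r 0 ⟨hα0, hα2⟩ hr hr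
    have hMnn : 0 ≤ M := by
      apply setIntegral_nonneg measurableSet_Ioi
      intro y hy
      rw [Set.mem_Ioi] at hy
      have h1 : 0 < y ^ 2 - r ^ 2 := by nlinarith
      have h2 : 0 < y := lt_trans hr hy
      positivity
    apply squeeze_zero_norm'
      (a := fun x : ℝ => (|c| * M) * (r ^ 2 - x ^ 2) ^ (α / 2))
    · -- eventual bound, for x ∈ Ioo (-r) 0
      have hmem : Set.Ioo (-r) 0 ∈ nhdsWithin (-r) (Set.Ioi (-r)) :=
        Ioo_mem_nhdsGT_of_mem ⟨le_refl _, by linarith⟩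
      filter_upwards [hmem] with x hx
      obtain ⟨hx1, hx2⟩ := hx
      have hC : (0:ℝ) ≤ (r ^ 2 - x ^ 2) ^ (α / 2) := Real.rpow_nonneg (by nlinarith) _
      have key : ‖∫ y in Set.Ioi r,
          (r ^ 2 - x ^ 2) ^ (α / 2) * (y ^ 2 - r ^ 2) ^ (-(α / 2)) * (y - x)⁻¹‖
          ≤ (r ^ 2 - x ^ 2) ^ (α / 2) * M := by
        have hgint : Integrable
            (fun y : ℝ => (r ^ 2 - x ^ 2) ^ (α / 2) * ((y ^ 2 - r ^ 2) ^ (-(α / 2)) * y⁻¹))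
            (volume.restrict (Set.Ioi r)) := hint0.const_mul _
        have hbound : ∀ᵐ y ∂(volume.restrict (Set.Ioi r)),
            ‖(r ^ 2 - x ^ 2) ^ (α / 2) * (y ^ 2 - r ^ 2) ^ (-(α / 2)) * (y - x)⁻¹‖
              ≤ (r ^ 2 - x ^ 2) ^ (α / 2) * ((y ^ 2 - r ^ 2) ^ (-(α / 2)) * y⁻¹) := by
          filter_upwards [ae_restrict_mem measurableSet_Ioi] with y hy
          rw [Set.mem_Ioi] at hy
          have hy0 : 0 < y := by linarith
          have hsq : 0 < y ^ 2 - r ^ 2 := by nlinarith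
          have hyx : 0 < y - x := by linarith
          have h2 : (y - x)⁻¹ ≤ y⁻¹ := inv_anti₀ hy0 (by linarith)
          rw [Real.norm_eq_abs, abs_of_nonneg (by positivity), mul_assoc]
          apply mul_le_mul_of_nonneg_left _ hC
          exact mul_le_mul_of_nonneg_left h2 (Real.rpow_nonneg hsq.le _)
        calc ‖∫ y in Set.Ioi r,
            (r ^ 2 - x ^ 2) ^ (α / 2) * (y ^ 2 - r ^ 2) ^ (-(α / 2)) * (y - x)⁻¹‖
            ≤ ∫ y in Set.Ioi r,
              (r ^ 2 - x ^ 2) ^ (α / 2) * ((y ^ 2 - r ^ 2) ^ (-(α / 2)) * y⁻¹) :=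
              norm_integral_le_of_norm_le hgint hbound
          _ = (r ^ 2 - x ^ 2) ^ (α / 2) * M := by rw [integral_const_mul]
      rw [norm_mul]
      calc ‖c‖ * ‖∫ y in Set.Ioi r,
            (r ^ 2 - x ^ 2) ^ (α / 2) * (y ^ 2 - r ^ 2) ^ (-(α / 2)) * (y - x)⁻¹‖
          ≤ ‖c‖ * ((r ^ 2 - x ^ 2) ^ (α / 2) * M) :=
            mul_le_mul_of_nonneg_left key (norm_nonneg _)
        _ = (|c| * M) * (r ^ 2 - x ^ 2) ^ (α / 2) := by
            rw [Real.norm_eq_abs]; ring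
    · -- the bound tends to 0
      have h1 : Filter.Tendsto (fun x : ℝ => r ^ 2 - x ^ 2)
          (nhdsWithin (-r) (Set.Ioi (-r))) (nhds 0) := by
        have : Filter.Tendsto (fun x : ℝ => r ^ 2 - x ^ 2) (nhds (-r))
            (nhds (r ^ 2 - (-r) ^ 2)) := by
          exact (continuous_const.sub (continuous_pow 2)).tendsto _
        have h0 : r ^ 2 - (-r) ^ 2 = 0 := by ring
        rw [h0] at this
        exact this.mono_left nhdsWithin_le_nhds
      have h2 : Filter.Tendsto (fun t : ℝ => t ^ (α / 2)) (nhds 0)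
          (nhds ((0:ℝ) ^ (α / 2))) :=
        (Real.continuousAt_rpow_const 0 (α / 2) (Or.inr (by linarith))).tendsto
      have h3 := (h2.comp h1).const_mul (|c| * M)
      have h0 : (0:ℝ) ^ (α / 2) = 0 := Real.zero_rpow (by positivity)
      rw [h0, mul_zero] at h3
      exact h3
end
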